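/- arXiv:2010.06959 — 2 statements merged into one kernel-verified Lean document; each statement's English description precedes it below -/
import Mathlib

section
/- (Lemma 1, sufficient decrease.) Under Assumption 1, let (x^k, u^k)_{k∈ℕ} be a sequence generated by the Unifying AM algorithm. Then there exists ρ₁ > 0 such that for all k ≥ 1, ρ₁ ‖x^{k+1} − x^k‖² ≤ G(x^k, u^{k−1}) − G(x^{k+1}, u^k). -/
open scoped RealInnerProductSpace BigOperators
open Finset

/-- The smooth surrogate objective `G(x,u)`. -/
noncomputable def objG (n N m : ℕ)
    (E1 : Finset (Fin N × Fin N)) (E2 : Finset (Fin N × Fin m))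
    (a : Fin m → EuclideanSpace ℝ (Fin n))
    (d1 : Fin N × Fin N → ℝ) (d2 : Fin N × Fin m → ℝ)
    (x : Fin N → EuclideanSpace ℝ (Fin n))
    (u1 : Fin N × Fin N → EuclideanSpace ℝ (Fin n))
    (u2 : Fin N × Fin m → EuclideanSpace ℝ (Fin n)) : ℝ :=
  (∑ e ∈ E1, (‖x e.1 - x e.2‖ ^ 2 - 2 * d1 e * ⟪u1 e, x e.1 - x e.2⟫)) +
  ∑ e ∈ E2, (‖x e.1 - a e.2‖ ^ 2 - 2 * d2 e * ⟪u2 e, x e.1 - a e.2⟫)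

/-- The relation of the network graph on vertices `V ∪ A = Fin N ⊕ Fin m`. -/
def netRel (N m : ℕ) (E1 : Finset (Fin N × Fin N)) (E2 : Finset (Fin N × Fin m)) :
    (Fin N ⊕ Fin m) → (Fin N ⊕ Fin m) → Prop := fun p q =>
  match p, q with
  | Sum.inl i, Sum.inl j => (i, j) ∈ E1
  | Sum.inl i, Sum.inr j => (i, j) ∈ E2
  | _, _ => False

/-- `(x^k, u^k)` is a sequence generated by the Unifying AM algorithm with
clusters `C 0, …, C (q−1)`:
* the initial `u^0` is feasible (each `u^0_{ij}` in the closed unit ball);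
* the sensor update produces `x^{k+1}` from `x^k` through intermediate
  configurations `z 0 = x^k, …, z q = x^{k+1}`, where `z (l+1)` agrees with
  `z l` off the cluster `C l` and minimizes `G(·, u^k)` over all
  configurations agreeing with `z l` off `C l`;
* the auxiliary update sets `u^{k+1}_{ij} = v^{k+1}_{ij}/‖v^{k+1}_{ij}‖` when
  `v^{k+1}_{ij} ≠ 0` and `0` otherwise (both cases captured by `‖v‖⁻¹ • v`,
  since `(0:ℝ)⁻¹ = 0`). -/
def IsAMSeq (n N m : ℕ)
    (E1 : Finset (Fin N × Fin N)) (E2 : Finset (Fin N × Fin m))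
    (a : Fin m → EuclideanSpace ℝ (Fin n))
    (d1 : Fin N × Fin N → ℝ) (d2 : Fin N × Fin m → ℝ)
    (q : ℕ) (C : Fin q → Finset (Fin N))
    (x : ℕ → Fin N → EuclideanSpace ℝ (Fin n))
    (u1 : ℕ → Fin N × Fin N → EuclideanSpace ℝ (Fin n))
    (u2 : ℕ → Fin N × Fin m → EuclideanSpace ℝ (Fin n)) : Prop :=
  (∀ e ∈ E1, ‖u1 0 e‖ ≤ 1) ∧ (∀ e ∈ E2, ‖u2 0 e‖ ≤ 1) ∧
  (∀ k : ℕ, ∃ z : Fin (q + 1) → Fin N → EuclideanSpace ℝ (Fin n),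
    z 0 = x k ∧ z (Fin.last q) = x (k + 1) ∧
    ∀ l : Fin q,
      (∀ i : Fin N, i ∉ C l → z l.succ i = z l.castSucc i) ∧
      (∀ w : Fin N → EuclideanSpace ℝ (Fin n),
        (∀ i : Fin N, i ∉ C l → w i = z l.castSucc i) →
        objG n N m E1 E2 a d1 d2 (z l.succ) (u1 k) (u2 k) ≤
          objG n N m E1 E2 a d1 d2 w (u1 k) (u2 k))) ∧
  (∀ k : ℕ, ∀ e ∈ E1, u1 (k + 1) e =
    ‖x (k + 1) e.1 - x (k + 1) e.2‖⁻¹ • (x (k + 1) e.1 - x (k + 1) e.2)) ∧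
  (∀ k : ℕ, ∀ e ∈ E2, u2 (k + 1) e =
    ‖x (k + 1) e.1 - a e.2‖⁻¹ • (x (k + 1) e.1 - a e.2))

section AMaux

open scoped RealInnerProductSpace BigOperators
open Finset

variable {n N m : ℕ}

lemma AM.per_edge (v w u : EuclideanSpace ℝ (Fin n)) (d t : ℝ) :
    ‖v + t • w‖^2 - 2*d*⟪u, v + t • w⟫ =
    (‖v‖^2 - 2*d*⟪u,v⟫) + t*(2*⟪v,w⟫ - 2*d*⟪u,w⟫) + t^2*‖w‖^2 := by
  rw [norm_add_sq_real, inner_add_right, real_inner_smul_right, real_inner_smul_right,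
    norm_smul]
  simp only [norm_smul, Real.norm_eq_abs, mul_pow, sq_abs]
  ring

lemma AM.bnonneg (b Q : ℝ) (hQ : 0 ≤ Q) (h : ∀ t : ℝ, 0 ≤ t*b + t^2*Q) : 0 ≤ b := by
  by_contra hb
  push_neg at hb
  have hQ1 : (0:ℝ) < Q + 1 := by linarith
  set i := (Q+1)⁻¹ with hi
  have hipos : 0 < i := inv_pos.2 hQ1
  have h4 : i * (Q+1) = 1 := inv_mul_cancel₀ (ne_of_gt hQ1)
  have hiQ : i * Q = 1 - i := by linear_combination h4
  have h2 := h (-b * i)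
  have hexp : (-b*i)*b + (-b*i)^2*Q = -(b*i)^2 := by
    have h3 : (-b*i)^2*Q = (b*i)*(b*(i*Q)) := by ring
    rw [hiQ] at h3; rw [h3]; ring
  rw [hexp] at h2
  have hne : b * i ≠ 0 := mul_ne_zero (ne_of_lt hb) (ne_of_gt hipos)
  have : 0 < (b*i)^2 := by positivity
  linarith

lemma AM.walk_iff {V : Type*} {G : SimpleGraph V} {P : V → Prop}
    (hP : ∀ a b, G.Adj a b → (P a ↔ P b)) : ∀ {a b : V}, G.Walk a b → (P a ↔ P b) := by
  intro a b w
  induction w with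
  | nil => exact Iff.rfl
  | cons h p ih => exact (hP _ _ h).trans ih

lemma AM.fin_telescope {M : Type*} [AddCommGroup M] (q : ℕ) (f : Fin (q+1) → M) :
    ∑ l : Fin q, (f l.succ - f l.castSucc) = f (Fin.last q) - f 0 := by
  induction q with
  | zero => simp
  | succ q ih =>
    rw [Fin.sum_univ_castSucc]
    have h := ih (fun l => f l.castSucc)
    simp only [← Fin.succ_castSucc] at h
    rw [h]
    simp [Fin.succ_last]

noncomputable def AM.sumSq {n N : ℕ} (δ : Fin N → EuclideanSpace ℝ (Fin n)) : ℝ :=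
  ∑ i, ‖δ i‖ ^ 2

noncomputable def AM.quadQ (E1 : Finset (Fin N × Fin N)) (E2 : Finset (Fin N × Fin m))
    (δ : Fin N → EuclideanSpace ℝ (Fin n)) : ℝ :=
  (∑ e ∈ E1, ‖δ e.1 - δ e.2‖ ^ 2) + ∑ e ∈ E2, ‖δ e.1‖ ^ 2

noncomputable def AM.linL (E1 : Finset (Fin N × Fin N)) (E2 : Finset (Fin N × Fin m))
    (a : Fin m → EuclideanSpace ℝ (Fin n))
    (d1 : Fin N × Fin N → ℝ) (d2 : Fin N × Fin m → ℝ)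
    (x δ : Fin N → EuclideanSpace ℝ (Fin n))
    (u1 : Fin N × Fin N → EuclideanSpace ℝ (Fin n))
    (u2 : Fin N × Fin m → EuclideanSpace ℝ (Fin n)) : ℝ :=
  (∑ e ∈ E1, (2*⟪x e.1 - x e.2, δ e.1 - δ e.2⟫ - 2*d1 e*⟪u1 e, δ e.1 - δ e.2⟫)) +
  ∑ e ∈ E2, (2*⟪x e.1 - a e.2, δ e.1⟫ - 2*d2 e*⟪u2 e, δ e.1⟫)

open AM

lemma AM.objG_line (E1 : Finset (Fin N × Fin N)) (E2 : Finset (Fin N × Fin m))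
    (a : Fin m → EuclideanSpace ℝ (Fin n))
    (d1 : Fin N × Fin N → ℝ) (d2 : Fin N × Fin m → ℝ)
    (x δ : Fin N → EuclideanSpace ℝ (Fin n))
    (u1 : Fin N × Fin N → EuclideanSpace ℝ (Fin n))
    (u2 : Fin N × Fin m → EuclideanSpace ℝ (Fin n)) (t : ℝ) :
    objG n N m E1 E2 a d1 d2 (fun i => x i + t • δ i) u1 u2 =
      objG n N m E1 E2 a d1 d2 x u1 u2 + t * linL E1 E2 a d1 d2 x δ u1 u2
        + t^2 * quadQ E1 E2 δ := by
  unfold objG linL quadQ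
  have h1 : ∀ e ∈ E1,
      ‖(x e.1 + t • δ e.1) - (x e.2 + t • δ e.2)‖ ^ 2
        - 2 * d1 e * ⟪u1 e, (x e.1 + t • δ e.1) - (x e.2 + t • δ e.2)⟫ =
      (‖x e.1 - x e.2‖^2 - 2*d1 e*⟪u1 e, x e.1 - x e.2⟫)
        + t*(2*⟪x e.1 - x e.2, δ e.1 - δ e.2⟫ - 2*d1 e*⟪u1 e, δ e.1 - δ e.2⟫)
        + t^2*‖δ e.1 - δ e.2‖^2 := by
    intro e _
    have harg : (x e.1 + t • δ e.1) - (x e.2 + t • δ e.2)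
        = (x e.1 - x e.2) + t • (δ e.1 - δ e.2) := by
      rw [smul_sub]; abel
    rw [harg, per_edge]
  have h2 : ∀ e ∈ E2,
      ‖(x e.1 + t • δ e.1) - a e.2‖ ^ 2
        - 2 * d2 e * ⟪u2 e, (x e.1 + t • δ e.1) - a e.2⟫ =
      (‖x e.1 - a e.2‖^2 - 2*d2 e*⟪u2 e, x e.1 - a e.2⟫)
        + t*(2*⟪x e.1 - a e.2, δ e.1⟫ - 2*d2 e*⟪u2 e, δ e.1⟫)
        + t^2*‖δ e.1‖^2 := by
    intro e _
    have harg : (x e.1 + t • δ e.1) - a e.2 = (x e.1 - a e.2) + t • δ e.1 := by abel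
    rw [harg, per_edge]
  rw [Finset.sum_congr rfl h1, Finset.sum_congr rfl h2]
  simp only [Finset.sum_add_distrib, ← Finset.mul_sum]
  ring

lemma AM.quadQ_nonneg (E1 : Finset (Fin N × Fin N)) (E2 : Finset (Fin N × Fin m))
    (δ : Fin N → EuclideanSpace ℝ (Fin n)) : 0 ≤ quadQ E1 E2 δ := by
  unfold quadQ
  have h1 : (0:ℝ) ≤ ∑ e ∈ E1, ‖δ e.1 - δ e.2‖ ^ 2 :=
    Finset.sum_nonneg fun e _ => sq_nonneg _
  have h2 : (0:ℝ) ≤ ∑ e ∈ E2, ‖δ e.1‖ ^ 2 :=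
    Finset.sum_nonneg fun e _ => sq_nonneg _
  linarith

lemma AM.sumSq_nonneg (δ : Fin N → EuclideanSpace ℝ (Fin n)) : 0 ≤ sumSq δ :=
  Finset.sum_nonneg fun _ _ => sq_nonneg _

lemma AM.quadQ_smul (E1 : Finset (Fin N × Fin N)) (E2 : Finset (Fin N × Fin m))
    (c : ℝ) (δ : Fin N → EuclideanSpace ℝ (Fin n)) :
    quadQ E1 E2 (fun i => c • δ i) = c^2 * quadQ E1 E2 δ := by
  unfold quadQ
  simp only [← smul_sub, norm_smul, Real.norm_eq_abs, mul_pow, sq_abs, ← Finset.mul_sum]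
  ring

lemma AM.sumSq_smul (c : ℝ) (δ : Fin N → EuclideanSpace ℝ (Fin n)) :
    sumSq (fun i => c • δ i) = c^2 * sumSq δ := by
  unfold sumSq
  simp only [norm_smul, Real.norm_eq_abs, mul_pow, sq_abs, ← Finset.mul_sum]

lemma AM.sumSq_eq_zero {δ : Fin N → EuclideanSpace ℝ (Fin n)} (h : sumSq δ = 0) : δ = 0 := by
  funext i
  have h1 := (Finset.sum_eq_zero_iff_of_nonneg
    (fun j (_ : j ∈ Finset.univ) => sq_nonneg ‖δ j‖)).1 h i (Finset.mem_univ i)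
  have : ‖δ i‖ = 0 := by nlinarith [h1]
  simpa using this

lemma AM.exists_sigma (hn : 1 ≤ n) (hN : 1 ≤ N)
    (E1 : Finset (Fin N × Fin N)) (E2 : Finset (Fin N × Fin m))
    (hPD : ∀ δ : Fin N → EuclideanSpace ℝ (Fin n), δ ≠ 0 → 0 < quadQ E1 E2 δ) :
    ∃ σ : ℝ, 0 < σ ∧ ∀ δ : Fin N → EuclideanSpace ℝ (Fin n),
      σ * sumSq δ ≤ quadQ E1 E2 δ := by
  have hScont : Continuous (sumSq (n := n) (N := N)) := by
    unfold sumSq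
    exact continuous_finset_sum _ fun i _ => ((continuous_apply i).norm).pow 2
  have hQcont : Continuous (quadQ E1 E2 (n := n)) := by
    unfold quadQ
    apply Continuous.add
    · exact continuous_finset_sum _ fun e _ =>
        (((continuous_apply e.1).sub (continuous_apply e.2)).norm).pow 2
    · exact continuous_finset_sum _ fun e _ => ((continuous_apply e.1).norm).pow 2
  set K : Set (Fin N → EuclideanSpace ℝ (Fin n)) := {δ | sumSq δ = 1} with hK
  have hKco : IsCompact K := by
    have hclosed : IsClosed K := isClosed_eq hScont continuous_const
    have hsub : K ⊆ Metric.closedBall 0 1 := by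
      intro δ hδ
      rw [Metric.mem_closedBall, dist_zero_right]
      rw [pi_norm_le_iff_of_nonneg (by norm_num)]
      intro i
      have h1 : ‖δ i‖^2 ≤ 1 := by
        have hle := Finset.single_le_sum (f := fun j => ‖δ j‖^2)
          (fun j _ => sq_nonneg _) (Finset.mem_univ i)
        have hs : sumSq δ = 1 := hδ
        unfold sumSq at hs
        linarith
      nlinarith [norm_nonneg (δ i)]
    exact (isCompact_closedBall (0 : Fin N → EuclideanSpace ℝ (Fin n)) 1).of_isClosed_subset
      hclosed hsub
  have hKne : K.Nonempty := by
    refine ⟨fun i => if i = ⟨0, hN⟩ then EuclideanSpace.single (⟨0, hn⟩ : Fin n) (1:ℝ) else 0, ?_⟩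
    show sumSq _ = 1
    unfold sumSq
    rw [Finset.sum_eq_single (⟨0, hN⟩ : Fin N)]
    · simp [EuclideanSpace.norm_single]
    · intro j _ hj; simp [hj]
    · simp
  obtain ⟨δ₀, hδ₀K, hmin⟩ := hKco.exists_isMinOn hKne hQcont.continuousOn
  have hδ₀ne : δ₀ ≠ 0 := by
    intro h0
    have h1 : sumSq δ₀ = 1 := hδ₀K
    rw [h0] at h1
    unfold sumSq at h1
    simp at h1
  refine ⟨quadQ E1 E2 δ₀, hPD δ₀ hδ₀ne, ?_⟩
  intro δ
  rcases eq_or_ne δ 0 with h0 | h0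
  · subst h0
    unfold sumSq quadQ
    simp
  · have hS : 0 < sumSq δ := by
      rcases lt_or_eq_of_le (sumSq_nonneg δ) with h | h
      · exact h
      · exact absurd (sumSq_eq_zero h.symm) h0
    set s := Real.sqrt (sumSq δ) with hs
    have hspos : 0 < s := Real.sqrt_pos.2 hS
    have hs2 : s^2 = sumSq δ := Real.sq_sqrt hS.le
    have hin : (fun i => s⁻¹ • δ i) ∈ K := by
      show sumSq _ = 1
      rw [sumSq_smul]
      field_simp
      linarith [hs2]
    have h5 : quadQ E1 E2 δ₀ ≤ quadQ E1 E2 (fun i => s⁻¹ • δ i) := hmin hin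
    rw [quadQ_smul] at h5
    have h2 : quadQ E1 E2 δ₀ * s^2 ≤ quadQ E1 E2 δ := by
      have hs2pos : 0 < s^2 := by positivity
      calc quadQ E1 E2 δ₀ * s^2 ≤ ((s⁻¹)^2 * quadQ E1 E2 δ) * s^2 := by
            nlinarith [h5, hs2pos]
        _ = quadQ E1 E2 δ := by field_simp
    rw [hs2] at h2
    exact h2

lemma AM.pd_of_conn (E1 : Finset (Fin N × Fin N)) (E2 : Finset (Fin N × Fin m))
    (hconn : (SimpleGraph.fromRel (netRel N m E1 E2)).Connected) (hm : 1 ≤ m)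
    (δ : Fin N → EuclideanSpace ℝ (Fin n))
    (h1 : ∀ e ∈ E1, δ e.1 = δ e.2) (h2 : ∀ e ∈ E2, δ e.1 = 0) :
    δ = 0 := by
  set P : (Fin N ⊕ Fin m) → Prop := fun p =>
    match p with
    | Sum.inl i => δ i = 0
    | Sum.inr _ => True with hPdef
  have hadj : ∀ p q, (SimpleGraph.fromRel (netRel N m E1 E2)).Adj p q → (P p ↔ P q) := by
    intro p q hpq
    rw [SimpleGraph.fromRel_adj] at hpq
    obtain ⟨-, hr⟩ := hpq
    match p, q with
    | Sum.inl i, Sum.inl j =>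
      rcases hr with h | h
      · have := h1 (i, j) h
        simp only [hPdef]
        constructor <;> (intro hh; simp_all)
      · have := h1 (j, i) h
        simp only [hPdef]
        constructor <;> (intro hh; simp_all)
    | Sum.inl i, Sum.inr j =>
      rcases hr with h | h
      · have := h2 (i, j) h
        simp only [hPdef]
        simp_all
      · exact absurd h (by simp [netRel])
    | Sum.inr i, Sum.inl j =>
      rcases hr with h | h
      · exact absurd h (by simp [netRel])
      · have := h2 (j, i) h
        simp only [hPdef]
        simp_all
    | Sum.inr i, Sum.inr j =>
      rcases hr with h | h
      · exact absurd h (by simp [netRel])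
      · exact absurd h (by simp [netRel])
  funext i
  obtain ⟨w⟩ := hconn.preconnected (Sum.inl i) (Sum.inr ⟨0, hm⟩)
  have := (walk_iff hadj w).2 trivial
  simpa [hPdef] using this

lemma AM.block_descent (E1 : Finset (Fin N × Fin N)) (E2 : Finset (Fin N × Fin m))
    (a : Fin m → EuclideanSpace ℝ (Fin n))
    (d1 : Fin N × Fin N → ℝ) (d2 : Fin N × Fin m → ℝ)
    (u1 : Fin N × Fin N → EuclideanSpace ℝ (Fin n))
    (u2 : Fin N × Fin m → EuclideanSpace ℝ (Fin n))
    (σ : ℝ) (hσ : ∀ δ : Fin N → EuclideanSpace ℝ (Fin n), σ * sumSq δ ≤ quadQ E1 E2 δ)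
    (Cl : Finset (Fin N)) (y y' : Fin N → EuclideanSpace ℝ (Fin n))
    (hagree : ∀ i ∉ Cl, y' i = y i)
    (hmin : ∀ w : Fin N → EuclideanSpace ℝ (Fin n), (∀ i ∉ Cl, w i = y i) →
      objG n N m E1 E2 a d1 d2 y' u1 u2 ≤ objG n N m E1 E2 a d1 d2 w u1 u2) :
    objG n N m E1 E2 a d1 d2 y' u1 u2 + σ * sumSq (fun i => y i - y' i) ≤
      objG n N m E1 E2 a d1 d2 y u1 u2 := by
  set δ : Fin N → EuclideanSpace ℝ (Fin n) := fun i => y i - y' i with hδ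
  have hδ0 : ∀ i ∉ Cl, δ i = 0 := by
    intro i hi
    simp [hδ, hagree i hi]
  have hline : ∀ t : ℝ,
      0 ≤ t * linL E1 E2 a d1 d2 y' δ u1 u2 + t^2 * quadQ E1 E2 δ := by
    intro t
    have hw : ∀ i ∉ Cl, (y' i + t • δ i) = y i := by
      intro i hi
      rw [hδ0 i hi, smul_zero, add_zero, hagree i hi]
    have hm2 := hmin (fun i => y' i + t • δ i) hw
    rw [objG_line] at hm2
    linarith
  have hL : 0 ≤ linL E1 E2 a d1 d2 y' δ u1 u2 :=
    bnonneg _ _ (quadQ_nonneg _ _ _) hline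
  have heq : (fun i => y' i + (1:ℝ) • δ i) = y := by
    funext i
    simp [hδ]
  have hexp := objG_line E1 E2 a d1 d2 y' δ u1 u2 1
  rw [heq] at hexp
  have hQ := hσ δ
  rw [hexp]
  nlinarith [hL, hQ]

lemma AM.norm_inv_smul_le_one (v : EuclideanSpace ℝ (Fin n)) : ‖‖v‖⁻¹ • v‖ ≤ 1 := by
  rcases eq_or_ne v 0 with h | h
  · simp [h]
  · rw [norm_smul, Real.norm_eq_abs, abs_inv, abs_norm,
      inv_mul_cancel₀ (norm_ne_zero_iff.2 h)]

lemma AM.inner_inv_smul (v : EuclideanSpace ℝ (Fin n)) : ⟪‖v‖⁻¹ • v, v⟫ = ‖v‖ := by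
  rw [real_inner_smul_left, real_inner_self_eq_norm_sq]
  rcases eq_or_ne v 0 with h | h
  · simp [h]
  · rw [sq, ← mul_assoc, inv_mul_cancel₀ (norm_ne_zero_iff.2 h), one_mul]

lemma AM.u_step (E1 : Finset (Fin N × Fin N)) (E2 : Finset (Fin N × Fin m))
    (a : Fin m → EuclideanSpace ℝ (Fin n))
    (d1 : Fin N × Fin N → ℝ) (d2 : Fin N × Fin m → ℝ)
    (hd1 : ∀ e ∈ E1, 0 ≤ d1 e) (hd2 : ∀ e ∈ E2, 0 ≤ d2 e)
    (x : Fin N → EuclideanSpace ℝ (Fin n))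
    (u1 u1' : Fin N × Fin N → EuclideanSpace ℝ (Fin n))
    (u2 u2' : Fin N × Fin m → EuclideanSpace ℝ (Fin n))
    (hb1 : ∀ e ∈ E1, ‖u1 e‖ ≤ 1) (hb2 : ∀ e ∈ E2, ‖u2 e‖ ≤ 1)
    (hu1' : ∀ e ∈ E1, u1' e = ‖x e.1 - x e.2‖⁻¹ • (x e.1 - x e.2))
    (hu2' : ∀ e ∈ E2, u2' e = ‖x e.1 - a e.2‖⁻¹ • (x e.1 - a e.2)) :
    objG n N m E1 E2 a d1 d2 x u1' u2' ≤ objG n N m E1 E2 a d1 d2 x u1 u2 := by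
  unfold objG
  apply add_le_add
  · apply Finset.sum_le_sum
    intro e he
    have h1 : ⟪u1' e, x e.1 - x e.2⟫ = ‖x e.1 - x e.2‖ := by
      rw [hu1' e he, inner_inv_smul]
    have h2 : ⟪u1 e, x e.1 - x e.2⟫ ≤ ‖x e.1 - x e.2‖ := by
      calc ⟪u1 e, x e.1 - x e.2⟫ ≤ ‖u1 e‖ * ‖x e.1 - x e.2‖ := real_inner_le_norm _ _
        _ ≤ 1 * ‖x e.1 - x e.2‖ :=
            mul_le_mul_of_nonneg_right (hb1 e he) (norm_nonneg _)
        _ = ‖x e.1 - x e.2‖ := one_mul _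
    rw [h1]
    nlinarith [hd1 e he, h2]
  · apply Finset.sum_le_sum
    intro e he
    have h1 : ⟪u2' e, x e.1 - a e.2⟫ = ‖x e.1 - a e.2‖ := by
      rw [hu2' e he, inner_inv_smul]
    have h2 : ⟪u2 e, x e.1 - a e.2⟫ ≤ ‖x e.1 - a e.2‖ := by
      calc ⟪u2 e, x e.1 - a e.2⟫ ≤ ‖u2 e‖ * ‖x e.1 - a e.2‖ := real_inner_le_norm _ _
        _ ≤ 1 * ‖x e.1 - a e.2‖ :=
            mul_le_mul_of_nonneg_right (hb2 e he) (norm_nonneg _)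
        _ = ‖x e.1 - a e.2‖ := one_mul _
    rw [h1]
    nlinarith [hd2 e he, h2]

end AMaux

set_option maxHeartbeats 1000000 in
/-- Lemma 1 (sufficient decrease): under Assumption 1, along any sequence
generated by the Unifying AM algorithm there is `ρ₁ > 0` with
`ρ₁‖x^{k+1} − x^k‖² ≤ G(x^k, u^{k−1}) − G(x^{k+1}, u^k)` for all `k ≥ 1`. -/
theorem stmt11 (n N m : ℕ) (hn : 1 ≤ n) (hN : 1 ≤ N)
    (E1 : Finset (Fin N × Fin N)) (hE1 : ∀ e ∈ E1, e.1 < e.2)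
    (E2 : Finset (Fin N × Fin m))
    (a : Fin m → EuclideanSpace ℝ (Fin n))
    (d1 : Fin N × Fin N → ℝ) (d2 : Fin N × Fin m → ℝ)
    (hd1 : ∀ e ∈ E1, 0 ≤ d1 e) (hd2 : ∀ e ∈ E2, 0 ≤ d2 e)
    (hconn : (SimpleGraph.fromRel (netRel N m E1 E2)).Connected)
    (hm : 1 ≤ m)
    (q : ℕ) (C : Fin q → Finset (Fin N))
    (hCne : ∀ l, (C l).Nonempty)
    (hCdisj : ∀ l l', l ≠ l' → Disjoint (C l) (C l'))
    (hCcover : ∀ i : Fin N, ∃ l, i ∈ C l)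
    (x : ℕ → Fin N → EuclideanSpace ℝ (Fin n))
    (u1 : ℕ → Fin N × Fin N → EuclideanSpace ℝ (Fin n))
    (u2 : ℕ → Fin N × Fin m → EuclideanSpace ℝ (Fin n))
    (hAM : IsAMSeq n N m E1 E2 a d1 d2 q C x u1 u2) :
    ∃ ρ₁ : ℝ, 0 < ρ₁ ∧ ∀ k : ℕ, 1 ≤ k →
      ρ₁ * ∑ i, ‖x (k + 1) i - x k i‖ ^ 2 ≤
        objG n N m E1 E2 a d1 d2 (x k) (u1 (k - 1)) (u2 (k - 1)) -
          objG n N m E1 E2 a d1 d2 (x (k + 1)) (u1 k) (u2 k) := by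
  classical
  obtain ⟨hu10, hu20, hz, hu1upd, hu2upd⟩ := hAM
  -- positive definiteness of the quadratic form
  have hPD : ∀ δ : Fin N → EuclideanSpace ℝ (Fin n), δ ≠ 0 → 0 < AM.quadQ E1 E2 δ := by
    intro δ hδ
    rcases lt_or_eq_of_le (AM.quadQ_nonneg E1 E2 δ) with h | h
    · exact h
    · exfalso
      apply hδ
      have h0 : AM.quadQ E1 E2 δ = 0 := h.symm
      unfold AM.quadQ at h0
      have hn1 : (0:ℝ) ≤ ∑ e ∈ E1, ‖δ e.1 - δ e.2‖ ^ 2 :=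
        Finset.sum_nonneg fun e _ => sq_nonneg _
      have hn2 : (0:ℝ) ≤ ∑ e ∈ E2, ‖δ e.1‖ ^ 2 :=
        Finset.sum_nonneg fun e _ => sq_nonneg _
      have hs1 : (∑ e ∈ E1, ‖δ e.1 - δ e.2‖ ^ 2) = 0 := by linarith
      have hs2 : (∑ e ∈ E2, ‖δ e.1‖ ^ 2) = 0 := by linarith
      have he1 : ∀ e ∈ E1, δ e.1 = δ e.2 := by
        intro e he
        have h1 := (Finset.sum_eq_zero_iff_of_nonneg
          (fun e (_ : e ∈ E1) => sq_nonneg ‖δ e.1 - δ e.2‖)).1 hs1 e he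
        have h2 : ‖δ e.1 - δ e.2‖ = 0 := by nlinarith [h1, norm_nonneg (δ e.1 - δ e.2)]
        have := norm_eq_zero.1 h2
        exact sub_eq_zero.1 this
      have he2 : ∀ e ∈ E2, δ e.1 = 0 := by
        intro e he
        have h1 := (Finset.sum_eq_zero_iff_of_nonneg
          (fun e (_ : e ∈ E2) => sq_nonneg ‖δ e.1‖)).1 hs2 e he
        have h2 : ‖δ e.1‖ = 0 := by nlinarith [h1, norm_nonneg (δ e.1)]
        exact norm_eq_zero.1 h2
      exact AM.pd_of_conn E1 E2 hconn hm δ he1 he2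
  obtain ⟨σ, hσpos, hσ⟩ := AM.exists_sigma hn hN E1 E2 hPD
  refine ⟨σ, hσpos, ?_⟩
  intro k hk
  have hk1 : k - 1 + 1 = k := Nat.succ_pred_eq_of_pos hk
  -- bounds on u^{k-1}
  have hb1 : ∀ e ∈ E1, ‖u1 (k-1) e‖ ≤ 1 := by
    cases hkm : k - 1 with
    | zero => exact hu10
    | succ j =>
      intro e he
      rw [hu1upd j e he]
      exact AM.norm_inv_smul_le_one _
  have hb2 : ∀ e ∈ E2, ‖u2 (k-1) e‖ ≤ 1 := by
    cases hkm : k - 1 with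
    | zero => exact hu20
    | succ j =>
      intro e he
      rw [hu2upd j e he]
      exact AM.norm_inv_smul_le_one _
  -- Step A : updating u decreases G
  have hstepA : objG n N m E1 E2 a d1 d2 (x k) (u1 k) (u2 k) ≤
      objG n N m E1 E2 a d1 d2 (x k) (u1 (k-1)) (u2 (k-1)) := by
    refine AM.u_step E1 E2 a d1 d2 hd1 hd2 (x k) (u1 (k-1)) (u1 k) (u2 (k-1)) (u2 k)
      hb1 hb2 ?_ ?_
    · intro e he
      have := hu1upd (k-1) e he
      rwa [hk1] at this
    · intro e he
      have := hu2upd (k-1) e he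
      rwa [hk1] at this
  -- Step B : block descent
  obtain ⟨z, hz0, hzlast, hstep⟩ := hz k
  have hblock : ∀ l : Fin q,
      objG n N m E1 E2 a d1 d2 (z l.succ) (u1 k) (u2 k)
        + σ * AM.sumSq (fun i => z l.castSucc i - z l.succ i) ≤
      objG n N m E1 E2 a d1 d2 (z l.castSucc) (u1 k) (u2 k) := fun l =>
    AM.block_descent E1 E2 a d1 d2 (u1 k) (u2 k) σ hσ (C l) (z l.castSucc) (z l.succ)
      (hstep l).1 (hstep l).2
  set F : Fin (q+1) → ℝ := fun j => objG n N m E1 E2 a d1 d2 (z j) (u1 k) (u2 k) with hF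
  have htel : ∑ l : Fin q, (F l.succ - F l.castSucc) = F (Fin.last q) - F 0 :=
    AM.fin_telescope q F
  have hsum : σ * ∑ l : Fin q, AM.sumSq (fun i => z l.castSucc i - z l.succ i) ≤
      F 0 - F (Fin.last q) := by
    rw [Finset.mul_sum]
    have h1 : ∑ l : Fin q, σ * AM.sumSq (fun i => z l.castSucc i - z l.succ i) ≤
        ∑ l : Fin q, (F l.castSucc - F l.succ) :=
      Finset.sum_le_sum fun l _ => by
        have := hblock l
        simp only [hF]
        linarith
    have h2 : ∑ l : Fin q, (F l.castSucc - F l.succ) =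
        -∑ l : Fin q, (F l.succ - F l.castSucc) := by
      rw [← Finset.sum_neg_distrib]
      exact Finset.sum_congr rfl fun l _ => by ring
    rw [h2, htel] at h1
    linarith
  -- pointwise bound
  have hpt : ∀ i : Fin N, ‖x (k+1) i - x k i‖^2 ≤
      ∑ l : Fin q, ‖z l.castSucc i - z l.succ i‖^2 := by
    intro i
    obtain ⟨l₀, hl₀⟩ := hCcover i
    have htz : ∑ l : Fin q, (z l.succ i - z l.castSucc i) = x (k+1) i - x k i := by
      have h4 : ∑ l : Fin q, (z l.succ i - z l.castSucc i)
          = z (Fin.last q) i - z 0 i := AM.fin_telescope q (fun j => z j i)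
      rw [hzlast, hz0] at h4
      exact h4
    have hsingle : ∑ l : Fin q, (z l.succ i - z l.castSucc i)
        = z l₀.succ i - z l₀.castSucc i := by
      apply Finset.sum_eq_single l₀
      · intro l _ hl
        have hiC : i ∉ C l := fun hin =>
          Finset.disjoint_left.1 (hCdisj l l₀ hl) hin hl₀
        rw [(hstep l).1 i hiC, sub_self]
      · intro h; exact absurd (Finset.mem_univ l₀) h
    have heq : x (k+1) i - x k i = z l₀.succ i - z l₀.castSucc i := by
      rw [← htz, hsingle]
    have h9 := Finset.single_le_sum (f := fun l : Fin q => ‖z l.castSucc i - z l.succ i‖^2)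
      (fun l _ => sq_nonneg _) (Finset.mem_univ l₀)
    calc ‖x (k+1) i - x k i‖^2 = ‖z l₀.castSucc i - z l₀.succ i‖^2 := by
          rw [heq, norm_sub_rev]
      _ ≤ ∑ l : Fin q, ‖z l.castSucc i - z l.succ i‖^2 := h9
  have hsum2 : ∑ i, ‖x (k+1) i - x k i‖^2 ≤
      ∑ l : Fin q, AM.sumSq (fun i => z l.castSucc i - z l.succ i) := by
    calc ∑ i, ‖x (k+1) i - x k i‖^2
        ≤ ∑ i, ∑ l : Fin q, ‖z l.castSucc i - z l.succ i‖^2 :=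
          Finset.sum_le_sum fun i _ => hpt i
      _ = ∑ l : Fin q, ∑ i, ‖z l.castSucc i - z l.succ i‖^2 := Finset.sum_comm
      _ = ∑ l : Fin q, AM.sumSq (fun i => z l.castSucc i - z l.succ i) := rfl
  have hF0 : F 0 = objG n N m E1 E2 a d1 d2 (x k) (u1 k) (u2 k) := by
    simp only [hF, hz0]
  have hFl : F (Fin.last q) = objG n N m E1 E2 a d1 d2 (x (k+1)) (u1 k) (u2 k) := by
    simp only [hF, hzlast]
  have hfinal : σ * ∑ i, ‖x (k+1) i - x k i‖^2 ≤
      σ * ∑ l : Fin q, AM.sumSq (fun i => z l.castSucc i - z l.succ i) :=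
    mul_le_mul_of_nonneg_left hsum2 hσpos.le
  rw [hF0, hFl] at hsum
  linarith
end

section
/- Under Assumption 1, let (x^k, u^k)_{k∈ℕ} be a sequence generated by the Unifying AM algorithm. Then the sequence of objective values (G(x^k, u^k))_{k≥1} is nonincreasing, bounded below by −Σ_{(i,j)∈E} d_{ij}², and hence converges. -/
open scoped RealInnerProductSpace BigOperators
open Finset

lemma aux_norm_inv_smul_le_one {n : ℕ} (v : EuclideanSpace ℝ (Fin n)) :
    ‖‖v‖⁻¹ • v‖ ≤ 1 := by
  rcases eq_or_ne v 0 with h | h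
  · simp [h]
  · rw [norm_smul, norm_inv, norm_norm,
      inv_mul_cancel₀ (norm_ne_zero_iff.mpr h)]

lemma aux_inner_inv_smul {n : ℕ} (v : EuclideanSpace ℝ (Fin n)) :
    ⟪‖v‖⁻¹ • v, v⟫ = ‖v‖ := by
  rcases eq_or_ne v 0 with h | h
  · simp [h]
  · rw [real_inner_smul_left, real_inner_self_eq_norm_sq, sq,
      inv_mul_cancel_left₀ (norm_ne_zero_iff.mpr h)]

lemma aux_term_mono {n : ℕ} (d : ℝ) (hd : 0 ≤ d)
    (u v : EuclideanSpace ℝ (Fin n)) (hu : ‖u‖ ≤ 1) :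
    ‖v‖ ^ 2 - 2 * d * ‖v‖ ≤ ‖v‖ ^ 2 - 2 * d * ⟪u, v⟫ := by
  have h1 : ⟪u, v⟫ ≤ ‖u‖ * ‖v‖ := real_inner_le_norm u v
  have h2 : ⟪u, v⟫ ≤ ‖v‖ :=
    h1.trans (mul_le_of_le_one_left (norm_nonneg v) hu)
  nlinarith [mul_le_mul_of_nonneg_left h2 hd]

lemma aux_term_lb {n : ℕ} (d : ℝ)
    (u v : EuclideanSpace ℝ (Fin n)) (hu : ‖u‖ ≤ 1) (hd : 0 ≤ d) :
    -(d ^ 2) ≤ ‖v‖ ^ 2 - 2 * d * ⟪u, v⟫ := by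
  have := aux_term_mono d hd u v hu
  nlinarith [sq_nonneg (‖v‖ - d)]

/-- Under Assumption 1, along any sequence generated by the Unifying AM
algorithm, the sequence of objective values `(G(x^k,u^k))_{k ≥ 1}` is
nonincreasing, bounded below by `−∑_{(i,j)∈E} d_{ij}²`, and hence
converges. -/
theorem stmt15 (n N m : ℕ) (hn : 1 ≤ n) (hN : 1 ≤ N)
    (E1 : Finset (Fin N × Fin N)) (hE1 : ∀ e ∈ E1, e.1 < e.2)
    (E2 : Finset (Fin N × Fin m))
    (a : Fin m → EuclideanSpace ℝ (Fin n))
    (d1 : Fin N × Fin N → ℝ) (d2 : Fin N × Fin m → ℝ)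
    (hd1 : ∀ e ∈ E1, 0 ≤ d1 e) (hd2 : ∀ e ∈ E2, 0 ≤ d2 e)
    (hconn : (SimpleGraph.fromRel (netRel N m E1 E2)).Connected)
    (hm : 1 ≤ m)
    (q : ℕ) (C : Fin q → Finset (Fin N))
    (hCne : ∀ l, (C l).Nonempty)
    (hCdisj : ∀ l l', l ≠ l' → Disjoint (C l) (C l'))
    (hCcover : ∀ i : Fin N, ∃ l, i ∈ C l)
    (x : ℕ → Fin N → EuclideanSpace ℝ (Fin n))
    (u1 : ℕ → Fin N × Fin N → EuclideanSpace ℝ (Fin n))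
    (u2 : ℕ → Fin N × Fin m → EuclideanSpace ℝ (Fin n))
    (hAM : IsAMSeq n N m E1 E2 a d1 d2 q C x u1 u2) :
    (∀ k : ℕ, 1 ≤ k →
      objG n N m E1 E2 a d1 d2 (x (k + 1)) (u1 (k + 1)) (u2 (k + 1)) ≤
        objG n N m E1 E2 a d1 d2 (x k) (u1 k) (u2 k)) ∧
    (∀ k : ℕ, 1 ≤ k →
      -((∑ e ∈ E1, d1 e ^ 2) + ∑ e ∈ E2, d2 e ^ 2) ≤
        objG n N m E1 E2 a d1 d2 (x k) (u1 k) (u2 k)) ∧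
    ∃ c : ℝ, Filter.Tendsto
      (fun k => objG n N m E1 E2 a d1 d2 (x k) (u1 k) (u2 k))
      Filter.atTop (nhds c) := by
  obtain ⟨hu10, hu20, hz, hup1, hup2⟩ := hAM
  set g : ℕ → ℝ := fun k =>
    objG n N m E1 E2 a d1 d2 (x k) (u1 k) (u2 k) with hg
  -- feasibility of u for all k
  have hfeas1 : ∀ k, ∀ e ∈ E1, ‖u1 k e‖ ≤ 1 := by
    intro k e he
    cases k with
    | zero => exact hu10 e he
    | succ k => rw [hup1 k e he]; exact aux_norm_inv_smul_le_one _
  have hfeas2 : ∀ k, ∀ e ∈ E2, ‖u2 k e‖ ≤ 1 := by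
    intro k e he
    cases k with
    | zero => exact hu20 e he
    | succ k => rw [hup2 k e he]; exact aux_norm_inv_smul_le_one _
  -- Step A: sensor update decreases G (for every k)
  have hA : ∀ k, objG n N m E1 E2 a d1 d2 (x (k + 1)) (u1 k) (u2 k) ≤
      objG n N m E1 E2 a d1 d2 (x k) (u1 k) (u2 k) := by
    intro k
    obtain ⟨z, hz0, hzlast, hstep⟩ := hz k
    have key : ∀ t : ℕ, ∀ ht : t ≤ q,
        objG n N m E1 E2 a d1 d2 (z ⟨t, Nat.lt_succ_of_le ht⟩) (u1 k) (u2 k) ≤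
        objG n N m E1 E2 a d1 d2 (z 0) (u1 k) (u2 k) := by
      intro t
      induction t with
      | zero => intro _; exact le_of_eq rfl
      | succ t ih =>
        intro ht
        have htq : t < q := ht
        have h1 := (hstep ⟨t, htq⟩).2 (z (Fin.castSucc ⟨t, htq⟩))
          (fun i _ => rfl)
        have e1 : (Fin.succ (⟨t, htq⟩ : Fin q)) =
            (⟨t + 1, Nat.lt_succ_of_le ht⟩ : Fin (q + 1)) := rfl
        have e2 : (Fin.castSucc (⟨t, htq⟩ : Fin q)) =
            (⟨t, Nat.lt_succ_of_le (le_of_lt htq)⟩ : Fin (q + 1)) := rfl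
        rw [e1, e2] at h1
        exact h1.trans (ih (le_of_lt htq))
    have := key q le_rfl
    have e3 : (⟨q, Nat.lt_succ_of_le le_rfl⟩ : Fin (q + 1)) = Fin.last q := rfl
    rw [e3, hzlast, hz0] at this
    exact this
  -- Step B: auxiliary update decreases G (for every k)
  have hB : ∀ k, objG n N m E1 E2 a d1 d2 (x (k + 1)) (u1 (k + 1)) (u2 (k + 1)) ≤
      objG n N m E1 E2 a d1 d2 (x (k + 1)) (u1 k) (u2 k) := by
    intro k
    unfold objG
    apply add_le_add
    · apply Finset.sum_le_sum
      intro e he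
      rw [hup1 k e he, aux_inner_inv_smul]
      exact aux_term_mono (d1 e) (hd1 e he) _ _ (hfeas1 k e he)
    · apply Finset.sum_le_sum
      intro e he
      rw [hup2 k e he, aux_inner_inv_smul]
      exact aux_term_mono (d2 e) (hd2 e he) _ _ (hfeas2 k e he)
  have hmono : ∀ k, g (k + 1) ≤ g k := fun k => (hB k).trans (hA k)
  -- lower bound for all k
  have hlb : ∀ k, -((∑ e ∈ E1, d1 e ^ 2) + ∑ e ∈ E2, d2 e ^ 2) ≤ g k := by
    intro k
    have h1 : ∑ e ∈ E1, -(d1 e ^ 2) ≤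
        ∑ e ∈ E1, (‖x k e.1 - x k e.2‖ ^ 2 - 2 * d1 e * ⟪u1 k e, x k e.1 - x k e.2⟫) :=
      Finset.sum_le_sum fun e he =>
        aux_term_lb (d1 e) _ _ (hfeas1 k e he) (hd1 e he)
    have h2 : ∑ e ∈ E2, -(d2 e ^ 2) ≤
        ∑ e ∈ E2, (‖x k e.1 - a e.2‖ ^ 2 - 2 * d2 e * ⟪u2 k e, x k e.1 - a e.2⟫) :=
      Finset.sum_le_sum fun e he =>
        aux_term_lb (d2 e) _ _ (hfeas2 k e he) (hd2 e he)
    have := add_le_add h1 h2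
    simp only [Finset.sum_neg_distrib] at this
    have heq : -((∑ e ∈ E1, d1 e ^ 2) + ∑ e ∈ E2, d2 e ^ 2) =
        -(∑ e ∈ E1, d1 e ^ 2) + -(∑ e ∈ E2, d2 e ^ 2) := by ring
    rw [heq]
    exact this
  refine ⟨fun k _ => hmono k, fun k _ => hlb k, ?_⟩
  have hant : Antitone g := antitone_nat_of_succ_le hmono
  have hbdd : BddBelow (Set.range g) :=
    ⟨-((∑ e ∈ E1, d1 e ^ 2) + ∑ e ∈ E2, d2 e ^ 2), by
      rintro y ⟨k, rfl⟩; exact hlb k⟩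
  exact ⟨⨅ k, g k, tendsto_atTop_ciInf hant hbdd⟩
end
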